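/- For every natural number n ≥ 2, there is no finitely supported injection from ℘_n(A), the set of n-element subsets of the set A of atoms with the elementwise action of finitary permutations, into A. -/

import Mathlib

open Pointwise

/-- The group of finitary permutations of the set `A` of atoms: bijections of `A`
whose set of non-fixed points is finite. -/
def FinPerm (A : Type*) : Subgroup (Equiv.Perm A) where
  carrier := {π : Equiv.Perm A | {a : A | π a ≠ a}.Finite}
  one_mem' := by simp
  mul_mem' := by
    intro π σ hπ hσ
    refine Set.Finite.subset (Set.Finite.union hπ hσ) ?_
    intro a ha
    simp only [Set.mem_setOf_eq, Set.mem_union] at *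
    by_contra h
    push_neg at h
    obtain ⟨h1, h2⟩ := h
    exact ha (by rw [Equiv.Perm.mul_apply, h2, h1])
  inv_mem' := by
    intro π hπ
    refine Set.Finite.subset hπ ?_
    intro a ha
    simp only [Set.mem_setOf_eq] at *
    intro h
    exact ha (π.injective (by simp [h]))

/-- An element `x` is finitely supported if some finite set of atoms supports it. -/
def FinSupp (A : Type*) {X : Type*} [SMul (FinPerm A) X] (x : X) : Prop :=
  ∃ S : Finset A, MulAction.Supports (FinPerm A) (S : Set A) x

/-- The least support of an element: the intersection of all finite sets of atoms
supporting it. -/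
def supp (A : Type*) {X : Type*} [SMul (FinPerm A) X] (x : X) : Set A :=
  ⋂₀ {S : Set A | S.Finite ∧ MulAction.Supports (FinPerm A) S x}

/-- A set `S` of atoms supports a function `f` if `f (π • x) = π • f x` for every
finitary permutation `π` fixing `S` pointwise. -/
def SuppFun (A : Type*) {X Y : Type*} [SMul (FinPerm A) X] [SMul (FinPerm A) Y]
    (S : Set A) (f : X → Y) : Prop :=
  ∀ π : FinPerm A, (∀ a ∈ S, π • a = a) → ∀ x, f (π • x) = π • f x

/-- A set `S` of atoms supports a function `f` between the subsets `X` and `Y` if, for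
every finitary permutation `π` fixing `S` pointwise and every `x ∈ X`, we have
`π • x ∈ X`, `π • f x ∈ Y` and `f (π • x) = π • f x`. -/
def SuppFunOn (A : Type*) {U V : Type*} [SMul (FinPerm A) U] [SMul (FinPerm A) V]
    (S : Set A) (X : Set U) (Y : Set V) (f : U → V) : Prop :=
  ∀ π : FinPerm A, (∀ a ∈ S, π • a = a) →
    ∀ x ∈ X, π • x ∈ X ∧ π • f x ∈ Y ∧ f (π • x) = π • f x

/-- `℘_fs(X)`: the finitely supported subsets of the set `X`. -/
def Pfs (A : Type*) {U : Type*} [SMul (FinPerm A) U] (X : Set U) : Set (Set U) :=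
  {Z : Set U | Z ⊆ X ∧ FinSupp A Z}

private lemma swap_mem_finPerm' {A : Type*} [DecidableEq A] (a b : A) :
    Equiv.swap a b ∈ FinPerm A := by
  refine Set.Finite.subset ((Set.finite_singleton b).insert a) ?_
  intro x hx
  simp only [Set.mem_setOf_eq, Set.mem_insert_iff, Set.mem_singleton_iff] at *
  by_contra h
  push_neg at h
  exact hx (Equiv.swap_apply_of_ne_of_ne h.1 h.2)

private lemma swap_image_self' {A : Type*} [DecidableEq A] {a b : A} {X : Set A}
    (h : ∀ y ∈ X, Equiv.swap a b y ∈ X) : Equiv.swap a b '' X = X := by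
  apply Set.Subset.antisymm
  · rintro _ ⟨y, hy, rfl⟩; exact h y hy
  · intro x hx
    exact ⟨Equiv.swap a b x, h x hx, Equiv.swap_apply_self a b x⟩

/-- for every `n ≥ 2` there is no finitely supported injection from
`℘_n(A)`, the set of `n`-element subsets of the set of atoms (with the elementwise
action), into `A`. -/
theorem no_finSupp_injection_nSubsets_to_atoms {A : Type*} [Infinite A]
    (n : ℕ) (hn : 2 ≤ n) :
    ¬ ∃ (f : Set A → A) (S : Finset A),
      Set.InjOn f {X : Set A | X.ncard = n} ∧
      (∀ π : FinPerm A, (∀ a ∈ (S : Set A), π • a = a) →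
        ∀ X : Set A, X.ncard = n → (π • X).ncard = n ∧ f (π • X) = π • f X) := by
  classical
  rintro ⟨f, S, hinj, hsupp⟩
  have hsmulA : ∀ (π : FinPerm A) (a : A), π • a = (π : Equiv.Perm A) a := fun _ _ => rfl
  have hsmulS : ∀ (π : FinPerm A) (X : Set A),
      π • X = ((π : Equiv.Perm A) : A → A) '' X := fun _ _ => rfl
  -- key: every n-set disjoint from S is sent into S
  have key : ∀ X : Set A, X.ncard = n → Disjoint X (S : Set A) → f X ∈ (S : Set A) := by
    intro X hX hdisj
    by_contra ha
    set a := f X with haX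
    -- find b with b ≠ a, suitable for the swap
    have hXfin : X.Finite := Set.finite_of_ncard_ne_zero (by omega)
    obtain ⟨b, hbX, hbS, hba⟩ : ∃ b, (b ∈ X ↔ a ∈ X) ∧ b ∉ (S : Set A) ∧ b ≠ a := by
      by_cases haX' : a ∈ X
      · obtain ⟨b, hb, hb'⟩ := Set.exists_ne_of_one_lt_ncard (s := X) (by omega) a
        exact ⟨b, by simp [hb, haX'], fun hbS => (Set.disjoint_left.mp hdisj hb) hbS, hb'⟩
      · obtain ⟨b, hb⟩ := ((hXfin.union (S.finite_toSet.union (Set.finite_singleton a))).infinite_compl).nonempty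
        simp only [Set.mem_compl_iff, Set.mem_union, Set.mem_singleton_iff, not_or] at hb
        exact ⟨b, by simp [hb.1, haX'], hb.2.1, hb.2.2⟩
    have haS : a ∉ (S : Set A) := ha
    set π : FinPerm A := ⟨Equiv.swap a b, swap_mem_finPerm' a b⟩ with hπ
    have hfix : ∀ s ∈ (S : Set A), π • s = s := by
      intro s hs
      rw [hsmulA]
      exact Equiv.swap_apply_of_ne_of_ne (fun h => haS (h ▸ hs)) (fun h => hbS (h ▸ hs))
    have hπX : π • X = X := by
      rw [hsmulS]
      apply swap_image_self'
      intro y hy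
      rcases eq_or_ne y a with rfl | hya
      · rw [Equiv.swap_apply_left]; exact hbX.mpr hy
      rcases eq_or_ne y b with rfl | hyb
      · rw [Equiv.swap_apply_right]; rwa [hbX] at hy
      · rwa [Equiv.swap_apply_of_ne_of_ne hya hyb]
    have := (hsupp π hfix X hX).2
    rw [hπX] at this
    have : a = Equiv.swap a b a := by
      conv_lhs => rw [haX, this, hsmulA]
    rw [Equiv.swap_apply_left] at this
    exact hba this.symm
  -- build infinitely many n-sets disjoint from S, all mapped into the finite S
  obtain ⟨B, hBsub, hBcard⟩ :=
    (Set.Finite.infinite_compl S.finite_toSet).exists_subset_card_eq (n - 1)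
  set D : Set A := ((S : Set A) ∪ (B : Set A))ᶜ with hD
  have hDinf : D.Infinite :=
    Set.Finite.infinite_compl (S.finite_toSet.union B.finite_toSet)
  have hcard : ∀ a ∈ D, (insert a (B : Set A)).ncard = n := by
    intro a haD
    simp only [hD, Set.mem_compl_iff, Set.mem_union, not_or] at haD
    rw [Set.ncard_insert_of_notMem haD.2 B.finite_toSet, Set.ncard_coe_finset, hBcard]
    omega
  have hdisj : ∀ a ∈ D, Disjoint (insert a (B : Set A)) (S : Set A) := by
    intro a haD
    simp only [hD, Set.mem_compl_iff, Set.mem_union, not_or] at haD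
    rw [Set.disjoint_left]
    rintro x (rfl | hx)
    · exact haD.1
    · exact fun hxS => (hBsub hx) hxS
  have hmaps : ∀ a ∈ D, f (insert a (B : Set A)) ∈ (S : Set A) :=
    fun a haD => key _ (hcard a haD) (hdisj a haD)
  have hinjD : Set.InjOn (fun a => f (insert a (B : Set A))) D := by
    intro a ha a' ha' hfa
    have h1 : insert a (B : Set A) = insert a' (B : Set A) :=
      hinj (hcard a ha) (hcard a' ha') hfa
    have : a ∈ insert a' (B : Set A) := h1 ▸ Set.mem_insert a _
    rcases this with rfl | hmem
    · rfl
    · simp only [hD, Set.mem_compl_iff, Set.mem_union, not_or] at ha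
      exact absurd hmem ha.2
  have : D.Finite := by
    apply Set.Finite.of_finite_image _ hinjD
    exact S.finite_toSet.subset (by rintro _ ⟨a, ha, rfl⟩; exact hmaps a ha)
  exact hDinf this
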